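/- Let K be a quasi-arithmetic compact set of module μ and ratio ρ (a natural number ρ ≥ 2). If n/ρ^p ∈ T_v and n/ρ^q ∈ T_w for the same natural number n, then pμ − v = qμ − w. -/

import Mathlib

open Ordinal Filter Topology Set

/-- The `n`-th derived set of `A ⊆ ℝ`. -/
noncomputable def iterDeriv (A : Set ℝ) (n : ℕ) : Set ℝ := (derivedSet (X := ℝ))^[n] A


lemma homeo_image_derivedSet (f : ℝ ≃ₜ ℝ) (A : Set ℝ) :
    f '' derivedSet A = derivedSet (f '' A) := by
  refine subset_antisymm (f.continuous.image_derivedSet f.injective) ?_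
  intro x hx
  have h2 := f.symm.continuous.image_derivedSet f.symm.injective
      (A := f '' A) ⟨x, hx, rfl⟩
  have him : f.symm '' (f '' A) = A := by
    simp [Set.image_image]
  rw [him] at h2
  exact ⟨f.symm x, h2, f.apply_symm_apply x⟩

lemma homeo_image_iterDeriv (f : ℝ ≃ₜ ℝ) (A : Set ℝ) (k : ℕ) :
    f '' iterDeriv A k = iterDeriv (f '' A) k := by
  induction k with
  | zero => rfl
  | succ k ih =>
      show f '' (derivedSet^[k+1] A) = derivedSet^[k+1] (f '' A)
      rw [Function.iterate_succ_apply', Function.iterate_succ_apply']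
      rw [show derivedSet^[k] A = iterDeriv A k from rfl,
        show derivedSet^[k] (f '' A) = iterDeriv (f '' A) k from rfl,
        homeo_image_derivedSet, ih]

/-- The ordinal `ω ^ ω`. -/
noncomputable def wOmega : Ordinal.{0} := Ordinal.omega0 ^ Ordinal.omega0

/-- An enumeration of `K ⊆ ℝ` witnessing that `K`, with the reverse of the usual order,
is well-ordered with order type `ω ^ ω + 1`: its elements are exactly `e α` for
`α ≤ ω ^ ω`, and the enumeration is strictly order-reversing. `e α` is the element
written `K[α]`. -/
structure OrdEnum (K : Set ℝ) where
  e : Ordinal.{0} → ℝ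
  mem : ∀ α ≤ wOmega, e α ∈ K
  surj : ∀ x ∈ K, ∃ α ≤ wOmega, e α = x
  anti : ∀ ⦃α β : Ordinal.{0}⦄, α ≤ wOmega → β ≤ wOmega → (α < β ↔ e β < e α)

/-- An enumeration of a set `S ⊆ ℝ` of reverse-order type `ω ^ ω` (indices `α < ω ^ ω`),
strictly order-reversing; `e α` is the element written `S[α]`. -/
structure SubEnum (S : Set ℝ) where
  e : Ordinal.{0} → ℝ
  mem : ∀ α < wOmega, e α ∈ S
  surj : ∀ x ∈ S, ∃ α < wOmega, e α = x
  anti : ∀ ⦃α β : Ordinal.{0}⦄, α < wOmega → β < wOmega → (α < β ↔ e β < e α)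

/-- A self-similar compact set of ratio `ρ > 1` and module `μ ≥ 1`:
a compact `K ⊆ [0, ∞)`, well-ordered by the reverse usual order with order
type `ω ^ ω + 1`, satisfying `ρ • K^(μ) = K`. -/
def SelfSimilar (K : Set ℝ) (ρ : ℝ) (μ : ℕ) : Prop :=
  IsCompact K ∧ K ⊆ Set.Ici 0 ∧ 1 < ρ ∧ 1 ≤ μ ∧
    (fun x => ρ * x) '' iterDeriv K μ = K ∧ Nonempty (OrdEnum K)

/-- A quasi-arithmetic compact set of module `μ` and natural ratio `ρ ≥ 2`. -/
def QuasiArith (K : Set ℝ) (ρ μ : ℕ) : Prop :=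
  SelfSimilar K (ρ : ℝ) μ ∧ 2 ≤ ρ ∧ ∃ κ : ℕ → ℕ,
    K \ {0} = {x : ℝ | ∃ m k : ℕ, ¬ (ρ ∣ m) ∧ κ m ≤ k ∧ x = (m : ℝ) / (ρ : ℝ) ^ k}

theorem quasiArith_gauge_well_defined (K : Set ℝ) (ρ μ : ℕ)
    (h : QuasiArith K ρ μ) (T : ℕ → Set ℝ)
    (hT : ∀ u, T u = iterDeriv K u \ iterDeriv K (u + 1))
    (n p q v w : ℕ) (hn : 0 < n)
    (hp : (n : ℝ) / (ρ : ℝ) ^ p ∈ T v) (hq : (n : ℝ) / (ρ : ℝ) ^ q ∈ T w) :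
    (p : ℤ) * μ - v = (q : ℤ) * μ - w := by
  obtain ⟨⟨hcpt, _, hρ1, hμ1, hK, _⟩, hρ2, _⟩ := h
  have hρ0 : (ρ : ℝ) ≠ 0 := by positivity
  set f : ℝ ≃ₜ ℝ := Homeomorph.mulLeft₀ (ρ : ℝ) hρ0 with hf
  have hfc : ⇑f = fun x : ℝ => (ρ : ℝ) * x := rfl
  -- image of higher derived sets
  have hfim : ∀ u : ℕ, f '' iterDeriv K (u + μ) = iterDeriv K u := by
    intro u
    have h1 : iterDeriv K (u + μ) = iterDeriv (iterDeriv K μ) u := by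
      show derivedSet^[u + μ] K = derivedSet^[u] (derivedSet^[μ] K)
      exact Function.iterate_add_apply _ u μ K
    rw [h1, homeo_image_iterDeriv, hfc, hK]
  -- image of the T sets
  have hTim : ∀ u : ℕ, f '' T (u + μ) = T u := by
    intro u
    rw [hT (u + μ), hT u, Set.image_diff f.injective, hfim u,
      show u + μ + 1 = (u + 1) + μ by ring, hfim (u + 1)]
  have step : ∀ (x : ℝ) (u : ℕ), x ∈ T (u + μ) ↔ (ρ : ℝ) * x ∈ T u := by
    intro x u
    rw [← hTim u]
    exact Iff.symm (f.injective.mem_set_image)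
  -- dividing by ρ^d moves T-index up by d*μ
  have hdiv : ∀ (x : ℝ) (u : ℕ), x ∈ T u → ∀ d : ℕ, x / (ρ : ℝ) ^ d ∈ T (u + d * μ) := by
    intro x u hx d
    induction d with
    | zero => simpa using hx
    | succ d ih =>
        have harith : u + (d + 1) * μ = (u + d * μ) + μ := by ring
        rw [harith, step]
        have : (ρ : ℝ) * (x / (ρ : ℝ) ^ (d + 1)) = x / (ρ : ℝ) ^ d := by
          rw [pow_succ]
          field_simp
        rw [this]
        exact ih
  -- the iterated derived sets are decreasing, hence the T's are disjoint
  have hclosed : ∀ m : ℕ, IsClosed (iterDeriv K m) := by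
    intro m
    cases m with
    | zero => exact hcpt.isClosed
    | succ m =>
        show IsClosed (derivedSet^[m + 1] K)
        rw [Function.iterate_succ_apply']
        exact isClosed_derivedSet _
  have hmono : ∀ m : ℕ, iterDeriv K (m + 1) ⊆ iterDeriv K m := by
    intro m
    show derivedSet^[m + 1] K ⊆ derivedSet^[m] K
    rw [Function.iterate_succ_apply']
    exact (isClosed_iff_derivedSet_subset _).mp (hclosed m)
  have hanti : ∀ a b : ℕ, a ≤ b → iterDeriv K b ⊆ iterDeriv K a := by
    intro a b hab
    induction hab with
    | refl => exact Set.Subset.rfl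
    | step h ih => exact (hmono _).trans ih
  have hdisj : ∀ u u' : ℕ, u < u' → ∀ x : ℝ, x ∈ T u → x ∈ T u' → False := by
    intro u u' huu x hxu hxu'
    rw [hT u] at hxu
    rw [hT u'] at hxu'
    exact hxu.2 (hanti (u + 1) u' huu hxu'.1)
  -- main symmetric argument
  have main : ∀ p q v w : ℕ, p ≤ q → (n : ℝ) / (ρ : ℝ) ^ p ∈ T v →
      (n : ℝ) / (ρ : ℝ) ^ q ∈ T w → (p : ℤ) * μ - v = (q : ℤ) * μ - w := by
    intro p q v w hpq hp hq
    obtain ⟨d, rfl⟩ := Nat.exists_eq_add_of_le hpq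
    have hx : (n : ℝ) / (ρ : ℝ) ^ (p + d) = ((n : ℝ) / (ρ : ℝ) ^ p) / (ρ : ℝ) ^ d := by
      rw [pow_add, div_div]
    have h2 := hdiv _ _ hp d
    rw [← hx] at h2
    have hw : w = v + d * μ := by
      rcases lt_trichotomy w (v + d * μ) with hlt | heq | hgt
      · exact absurd (hdisj w (v + d * μ) hlt _ hq h2) (fun h => h)
      · exact heq
      · exact absurd (hdisj (v + d * μ) w hgt _ h2 hq) (fun h => h)
    subst hw
    push_cast
    ring
  rcases le_total p q with h' | h'
  · exact main p q v w h' hp hq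
  · exact (main q p w v h' hq hp).symm
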